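/- arXiv:2012.13652 — 3 statements merged into one kernel-verified Lean document; each statement's English description precedes it below -/
import Mathlib

section
/- For any convex body C ⊂ S^d with diam(C) > π/2, the maximum of width_K(C) over all hemispheres K supporting C is at most diam(C). Consequently, for an arbitrary convex body C ⊂ S^d we have Δ(C) ≤ diam(C). -/
open Set Metric
open scoped RealInnerProductSpace

noncomputable section

/-- Euclidean space `E^{d+1}`. -/
abbrev E (d : ℕ) := EuclideanSpace ℝ (Fin (d + 1))

/-- The unit sphere `S^d ⊆ E^{d+1}`. -/
def Sph (d : ℕ) : Set (E d) := Metric.sphere (0 : E d) 1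

variable {d : ℕ}

/-- Geodesic (angular) distance on the unit sphere. -/
def sdist (x y : E d) : ℝ := Real.arccos ⟪x, y⟫

/-- Closed hemisphere with center `p`. -/
def Hemi (p : E d) : Set (E d) := {x ∈ Sph d | 0 ≤ ⟪p, x⟫}

/-- Open hemisphere with center `p`. -/
def openHemi (p : E d) : Set (E d) := {x ∈ Sph d | 0 < ⟪p, x⟫}

/-- Boundary great subsphere of the hemisphere with center `p`. -/
def bdHemi (p : E d) : Set (E d) := {x ∈ Sph d | ⟪p, x⟫ = 0}

/-- Spherical convexity: no antipodal pairs, and the nonnegative cone over the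
set is convex (equivalent to being closed under shorter arcs). -/
def SphConvex (C : Set (E d)) : Prop :=
  (∀ x ∈ C, -x ∉ C) ∧ Convex ℝ {v : E d | ∃ r : ℝ, 0 ≤ r ∧ ∃ x ∈ C, v = r • x}

/-- Spherical convex hull: the smallest spherically convex subset of the
sphere containing `A`. -/
def sConvHull (A : Set (E d)) : Set (E d) := ⋂₀ {C | SphConvex C ∧ C ⊆ Sph d ∧ A ⊆ C}

/-- Interior of `C` relative to the sphere. -/
def sInterior (C : Set (E d)) : Set (E d) :=
  {x ∈ Sph d | ∃ ε > 0, Metric.ball x ε ∩ Sph d ⊆ C}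

/-- A spherical convex body: closed, spherically convex, with nonempty
interior relative to the sphere. -/
def IsBody (C : Set (E d)) : Prop :=
  C ⊆ Sph d ∧ IsClosed C ∧ SphConvex C ∧ (sInterior C).Nonempty

/-- Spherical ball of radius `r` centered at `p`. -/
def sBall (p : E d) (r : ℝ) : Set (E d) := {x ∈ Sph d | sdist p x ≤ r}

/-- Normalization of a vector. -/
def nrm (v : E d) : E d := ‖v‖⁻¹ • v

/-- The center of the `(d-1)`-dimensional hemisphere `bd(G) ∩ H`, where `G`, `H`
are the hemispheres centered at `g`, `h`. -/
def cGH (g h : E d) : E d := nrm (h - ⟪g, h⟫ • g)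

/-- Thickness of the lune `Hemi g ∩ Hemi h`: the geodesic distance between the
centers of its two bounding `(d-1)`-dimensional hemispheres. -/
def lthick (g h : E d) : ℝ := Real.pi - sdist g h

/-- The hemisphere centered at `k` supports `C`. -/
def Supports (k : E d) (C : Set (E d)) : Prop :=
  C ⊆ Hemi k ∧ (bdHemi k ∩ C).Nonempty

/-- Width of `C` determined by a supporting hemisphere centered at `k`:
minimal thickness of a lune `K ∩ K*` over supporting hemispheres `K* ≠ K`. -/
def width (C : Set (E d)) (k : E d) : ℝ :=
  sInf {w | ∃ k' ∈ Sph d, k' ≠ k ∧ k' ≠ -k ∧ Supports k' C ∧ w = lthick k k'}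

/-- Thickness of `C`: minimal thickness of a lune containing `C`. -/
def thick (C : Set (E d)) : ℝ :=
  sInf {w | ∃ g ∈ Sph d, ∃ h ∈ Sph d, g ≠ h ∧ g ≠ -h ∧
    C ⊆ Hemi g ∩ Hemi h ∧ w = lthick g h}

/-- Spherical diameter of a set. -/
def sdiam (C : Set (E d)) : ℝ := sSup {r | ∃ x ∈ C, ∃ y ∈ C, r = sdist x y}

/-- Reduced spherical convex body. -/
def Reduced (R : Set (E d)) : Prop :=
  IsBody R ∧ ∀ Z : Set (E d), IsBody Z → Z ⊆ R → Z ≠ R → thick Z < thick R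

/-- Extreme point of a spherical convex body. -/
def ExtremePt (C : Set (E d)) (e : E d) : Prop := e ∈ C ∧ SphConvex (C \ {e})


/-! ### Auxiliary lemmas -/

lemma mem_Sph_iff {x : E d} : x ∈ Sph d ↔ ‖x‖ = 1 := mem_sphere_zero_iff_norm

lemma arccos_anti {x y : ℝ} (h : x ≤ y) : Real.arccos y ≤ Real.arccos x := by
  rw [Real.arccos_eq_pi_div_two_sub_arcsin, Real.arccos_eq_pi_div_two_sub_arcsin]
  have := Real.monotone_arcsin h
  linarith

lemma inner_le_one' {x y : E d} (hx : ‖x‖ ≤ 1) (hy : ‖y‖ ≤ 1) : ⟪x, y⟫ ≤ 1 := by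
  nlinarith [abs_real_inner_le_norm x y, le_abs_self ⟪x, y⟫, norm_nonneg x, norm_nonneg y]

lemma neg_one_le_inner' {x y : E d} (hx : ‖x‖ ≤ 1) (hy : ‖y‖ ≤ 1) : -1 ≤ ⟪x, y⟫ := by
  nlinarith [abs_real_inner_le_norm x y, neg_abs_le ⟪x, y⟫, norm_nonneg x, norm_nonneg y]

lemma sdist_nonneg' (x y : E d) : 0 ≤ sdist x y := Real.arccos_nonneg _

lemma sdist_le_pi' (x y : E d) : sdist x y ≤ Real.pi := Real.arccos_le_pi _

lemma lthick_nonneg' (g h : E d) : 0 ≤ lthick g h := by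
  have := sdist_le_pi' g h
  simp only [lthick]; linarith

lemma inner_self_one {x : E d} (hx : ‖x‖ = 1) : ⟪x, x⟫ = 1 := by
  rw [real_inner_self_eq_norm_sq, hx]; norm_num

lemma real_arith {c e a r t : ℝ} (hce1 : -1 ≤ c) (hce2 : c ≤ 1) (hee1 : -1 ≤ e)
    (hee2 : e ≤ 1) (ht0 : 0 < t) (ht2 : t ≤ 1/2) (hr0 : 0 ≤ r)
    (hX : r^2 = 1 + 2*(t*e) + t^2) (hub : r * c ≤ c + t*a) : c*e - t ≤ a := by
  have hte1 : t * (-1) ≤ t * e := mul_le_mul_of_nonneg_left hee1 ht0.le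
  have hte2 : t * e ≤ t * 1 := mul_le_mul_of_nonneg_left hee2 ht0.le
  have h1e : (0:ℝ) < 1 + t*e := by nlinarith
  have hsq1 : (1 + t*e)^2 ≤ r^2 := by nlinarith
  have hlow : 1 + t*e ≤ r := by
    have h5 := Real.sqrt_le_sqrt hsq1
    rwa [Real.sqrt_sq h1e.le, Real.sqrt_sq hr0] at h5
  have hsq2 : r^2 ≤ (1 + t*e + t^2)^2 := by nlinarith [sq_nonneg (e + t), sq_nonneg t]
  have hup : r ≤ 1 + t*e + t^2 := by
    have h5 := Real.sqrt_le_sqrt hsq2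
    rwa [Real.sqrt_sq hr0, Real.sqrt_sq (by nlinarith : (0:ℝ) ≤ 1 + t*e + t^2)] at h5
  rcases le_or_gt 0 c with hc0 | hc0
  · have hl2 : (1 + t*e) * c ≤ r * c := mul_le_mul_of_nonneg_right hlow hc0
    have h6 : t * (c*e) ≤ t * a := by nlinarith
    have h7 := le_of_mul_le_mul_left h6 ht0
    linarith
  · have h7 : (1 + t*e + t^2) * c ≤ r * c := mul_le_mul_of_nonpos_right hup hc0.le
    have h6 : t * (c*e + t*c) ≤ t * a := by nlinarith
    have h8 := le_of_mul_le_mul_left h6 ht0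
    nlinarith

/-- The key convexity inequality: if `q` minimizes `⟪p, ·⟫` over a spherically
convex `C`, then for every `z ∈ C` we have `⟪p,q⟫⟪q,z⟫ ≤ ⟪p,z⟫`. -/
lemma key_ineq {C : Set (E d)} (hconv : SphConvex C) (hCs : C ⊆ Sph d)
    {p q z : E d} (hpn : ‖p‖ ≤ 1) (hq : q ∈ C) (hz : z ∈ C)
    (hfar : ∀ w ∈ C, ⟪p, q⟫ ≤ ⟪p, w⟫) :
    ⟪p, q⟫ * ⟪q, z⟫ ≤ ⟪p, z⟫ := by
  have hqn : ‖q‖ = 1 := mem_Sph_iff.mp (hCs hq)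
  have hzn : ‖z‖ = 1 := mem_Sph_iff.mp (hCs hz)
  have hce : |⟪p, q⟫| ≤ 1 := by
    have h1 := abs_real_inner_le_norm p q
    rw [hqn] at h1; nlinarith [norm_nonneg p]
  have hee : |⟪q, z⟫| ≤ 1 := by
    have h1 := abs_real_inner_le_norm q z
    rw [hqn, hzn] at h1; linarith
  obtain ⟨hce1, hce2⟩ := abs_le.mp hce
  obtain ⟨hee1, hee2⟩ := abs_le.mp hee
  have main : ∀ t : ℝ, 0 < t → t ≤ 1/2 → ⟪p, q⟫ * ⟪q, z⟫ - t ≤ ⟪p, z⟫ := by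
    intro t ht0 ht2
    have h1 : ((2:ℝ) • q) ∈ {v : E d | ∃ r : ℝ, 0 ≤ r ∧ ∃ x ∈ C, v = r • x} :=
      ⟨2, by norm_num, q, hq, rfl⟩
    have h2 : ((2*t) • z) ∈ {v : E d | ∃ r : ℝ, 0 ≤ r ∧ ∃ x ∈ C, v = r • x} :=
      ⟨2*t, by linarith, z, hz, rfl⟩
    have h3 := hconv.2 h1 h2 (by norm_num : (0:ℝ) ≤ 1/2) (by norm_num : (0:ℝ) ≤ 1/2)
      (by norm_num)
    have h4 : (1/2 : ℝ) • ((2:ℝ) • q) + (1/2 : ℝ) • ((2*t) • z) = q + t • z := by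
      rw [smul_smul, smul_smul]
      norm_num
      module
    rw [h4] at h3
    obtain ⟨r, hr0, m, hm, hrm⟩ := h3
    have hmn : ‖m‖ = 1 := mem_Sph_iff.mp (hCs hm)
    have hrval : ‖q + t • z‖ = r := by
      rw [hrm, norm_smul, hmn, Real.norm_eq_abs, abs_of_nonneg hr0, mul_one]
    have hqq : ⟪q, q⟫ = 1 := inner_self_one hqn
    have hzz : ⟪z, z⟫ = 1 := inner_self_one hzn
    have hX : r^2 = 1 + 2*(t*⟪q, z⟫) + t^2 := by
      rw [← hrval, ← real_inner_self_eq_norm_sq, real_inner_add_add_self,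
        real_inner_smul_right, real_inner_smul_left, real_inner_smul_right, hqq, hzz]
      ring
    have hip : ⟪p, q + t • z⟫ = ⟪p, q⟫ + t*⟪p, z⟫ := by
      rw [inner_add_right, real_inner_smul_right]
    have hip2 : ⟪p, q + t • z⟫ = r * ⟪p, m⟫ := by rw [hrm, real_inner_smul_right]
    have hub : r * ⟪p, q⟫ ≤ ⟪p, q⟫ + t*⟪p, z⟫ := by
      rw [← hip, hip2]
      exact mul_le_mul_of_nonneg_left (hfar m hm) hr0
    exact real_arith hce1 hce2 hee1 hee2 ht0 ht2 hr0 hX hub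
  by_contra hlt
  push_neg at hlt
  have ht0 : 0 < min (1/2) ((⟪p, q⟫ * ⟪q, z⟫ - ⟪p, z⟫)/2) := lt_min (by norm_num) (by linarith)
  have h9 := main _ ht0 (min_le_left _ _)
  have h10 : min (1/2) ((⟪p, q⟫ * ⟪q, z⟫ - ⟪p, z⟫)/2) ≤ (⟪p, q⟫ * ⟪q, z⟫ - ⟪p, z⟫)/2 :=
    min_le_right _ _
  linarith

lemma norm_sub_inner_smul {p q : E d} (hp : ‖p‖ = 1) (hq : ‖q‖ = 1) :
    ‖p - ⟪p, q⟫ • q‖ = Real.sqrt (1 - ⟪p, q⟫^2) := by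
  have hin : ⟪p - ⟪p, q⟫ • q, p - ⟪p, q⟫ • q⟫ = 1 - ⟪p, q⟫^2 := by
    rw [inner_sub_sub_self, real_inner_smul_right, real_inner_smul_left,
      real_inner_smul_left, real_inner_smul_right, inner_self_one hp, inner_self_one hq,
      real_inner_comm q p]
    ring
  rw [norm_eq_sqrt_real_inner, hin]

lemma inner_gt_neg_one {C : Set (E d)} (hconv : SphConvex C) (hCs : C ⊆ Sph d)
    {p q : E d} (hp : p ∈ C) (hq : q ∈ C) : -1 < ⟪p, q⟫ := by
  have hpn : ‖p‖ = 1 := mem_Sph_iff.mp (hCs hp)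
  have hqn : ‖q‖ = 1 := mem_Sph_iff.mp (hCs hq)
  rcases eq_or_lt_of_le (neg_one_le_inner' hpn.le hqn.le) with h | h
  · exfalso
    have h2 : ⟪p, -q⟫ = 1 := by rw [inner_neg_right, ← h]; norm_num
    have h3 : p = -q := (inner_eq_one_iff_of_norm_eq_one hpn (by rwa [norm_neg])).mp h2
    exact hconv.1 q hq (h3 ▸ hp)
  · exact h

/-- The hemisphere touching a convex body at a farthest point supports it. -/
lemma support_far {C : Set (E d)} (hconv : SphConvex C) (hCs : C ⊆ Sph d)
    {p q : E d} (hp : p ∈ C) (hq : q ∈ C) (hc1 : ⟪p, q⟫ < 1)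
    (hfar : ∀ w ∈ C, ⟪p, q⟫ ≤ ⟪p, w⟫) :
    ∃ k : E d, k ∈ Sph d ∧ Supports k C ∧
      (∀ u : E d, ⟪k, u⟫ = (Real.sqrt (1 - ⟪p, q⟫^2))⁻¹ * (⟪p, u⟫ - ⟪p, q⟫ * ⟪q, u⟫)) := by
  have hpn : ‖p‖ = 1 := mem_Sph_iff.mp (hCs hp)
  have hqn : ‖q‖ = 1 := mem_Sph_iff.mp (hCs hq)
  have hcm : -1 < ⟪p, q⟫ := inner_gt_neg_one hconv hCs hp hq
  have hs0 : (0:ℝ) < 1 - ⟪p, q⟫^2 := by nlinarith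
  have hspos : 0 < Real.sqrt (1 - ⟪p, q⟫^2) := Real.sqrt_pos.mpr hs0
  have hform : ∀ u : E d, ⟪(Real.sqrt (1 - ⟪p, q⟫^2))⁻¹ • (p - ⟪p, q⟫ • q), u⟫
      = (Real.sqrt (1 - ⟪p, q⟫^2))⁻¹ * (⟪p, u⟫ - ⟪p, q⟫ * ⟪q, u⟫) := fun u => by
    rw [real_inner_smul_left, inner_sub_left, real_inner_smul_left]
  refine ⟨_, ?_, ⟨?_, ⟨q, ⟨hCs hq, ?_⟩, hq⟩⟩, hform⟩
  · rw [mem_Sph_iff, norm_smul, Real.norm_eq_abs, abs_of_nonneg (inv_nonneg.mpr hspos.le),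
      norm_sub_inner_smul hpn hqn]
    exact inv_mul_cancel₀ hspos.ne'
  · intro z hz
    refine ⟨hCs hz, ?_⟩
    rw [hform z]
    have hkey := key_ineq hconv hCs hpn.le hq hz hfar
    exact mul_nonneg (inv_nonneg.mpr (Real.sqrt_nonneg _)) (by linarith)
  · rw [hform q, inner_self_one hqn]
    simp

set_option maxHeartbeats 2000000 in
lemma stmt15_part1 {d : ℕ} (C : Set (E d)) (hC : IsBody C)
    (hhalf : Real.pi / 2 < sdiam C) :
    sSup {w | ∃ k ∈ Sph d, Supports k C ∧ w = width C k} ≤ sdiam C := by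
  obtain ⟨hCs, hCcl, hconv, hint⟩ := hC
  obtain ⟨x0, hx0s, ε, hε, hball⟩ := hint
  have hx0C : x0 ∈ C := hball ⟨mem_ball_self hε, hx0s⟩
  have hx0n : ‖x0‖ = 1 := mem_Sph_iff.mp hx0s
  have hne : C.Nonempty := ⟨x0, hx0C⟩
  have hcpt : IsCompact C := (isCompact_sphere (0 : E d) 1).of_isClosed_subset hCcl hCs
  have hDne : {r | ∃ x ∈ C, ∃ y ∈ C, r = sdist x y}.Nonempty :=
    ⟨sdist x0 x0, x0, hx0C, x0, hx0C, rfl⟩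
  have hDbdd : BddAbove {r | ∃ x ∈ C, ∃ y ∈ C, r = sdist x y} := by
    refine ⟨Real.pi, ?_⟩
    rintro r ⟨x, -, y, -, rfl⟩
    exact sdist_le_pi' x y
  have hdle : ∀ x ∈ C, ∀ y ∈ C, sdist x y ≤ sdiam C := fun x hx y hy =>
    le_csSup hDbdd ⟨x, hx, y, hy, rfl⟩
  have hδ0 : 0 ≤ sdiam C := by
    have h1 := hdle x0 hx0C x0 hx0C
    have h0 := sdist_nonneg' x0 x0
    linarith
  have hδπ : sdiam C ≤ Real.pi := csSup_le hDne (by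
    rintro r ⟨x, -, y, -, rfl⟩
    exact sdist_le_pi' x y)
  apply Real.sSup_le _ (by linarith)
  rintro w ⟨k, hkS, hsupp, rfl⟩
  have hkn : ‖k‖ = 1 := mem_Sph_iff.mp hkS
  obtain ⟨p, ⟨hps, hkp⟩, hpC⟩ := hsupp.2
  have hpn : ‖p‖ = 1 := mem_Sph_iff.mp hps
  obtain ⟨q, hqC, hqmin⟩ := hcpt.exists_isMinOn (f := fun z : E d => (⟪p, z⟫ : ℝ)) hne
    ((continuous_const.inner continuous_id).continuousOn)
  have hfar : ∀ w ∈ C, ⟪p, q⟫ ≤ ⟪p, w⟫ := fun w hw => hqmin hw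
  have hqn : ‖q‖ = 1 := mem_Sph_iff.mp (hCs hqC)
  obtain ⟨rr, ⟨x', hx', y', hy', rfl⟩, hr⟩ := exists_lt_of_lt_csSup hDne hhalf
  have hxy' : ⟪x', y'⟫ < 0 := by
    by_contra hcon
    push_neg at hcon
    have h2 : Real.arccos ⟪x', y'⟫ ≤ Real.arccos 0 := arccos_anti hcon
    rw [Real.arccos_zero] at h2
    rw [sdist] at hr
    linarith
  have hc1 : ⟪p, q⟫ < 1 := by
    by_contra hcon
    push_neg at hcon
    have hx'p : x' = p := by
      have h1 : ⟪p, x'⟫ = 1 := le_antisymm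
        (inner_le_one' hpn.le (mem_Sph_iff.mp (hCs hx')).le)
        (le_trans hcon (hfar x' hx'))
      exact ((inner_eq_one_iff_of_norm_eq_one hpn (mem_Sph_iff.mp (hCs hx'))).mp h1).symm
    have hy'p : y' = p := by
      have h1 : ⟪p, y'⟫ = 1 := le_antisymm
        (inner_le_one' hpn.le (mem_Sph_iff.mp (hCs hy')).le)
        (le_trans hcon (hfar y' hy'))
      exact ((inner_eq_one_iff_of_norm_eq_one hpn (mem_Sph_iff.mp (hCs hy'))).mp h1).symm
    rw [hx'p, hy'p, inner_self_one hpn] at hxy'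
    linarith
  obtain ⟨k', hk's, hk'supp, hform⟩ := support_far hconv hCs hpC hqC hc1 hfar
  have hcm : -1 < ⟪p, q⟫ := inner_gt_neg_one hconv hCs hpC hqC
  have hs0 : (0:ℝ) < 1 - ⟪p, q⟫^2 := by nlinarith
  have hspos : 0 < Real.sqrt (1 - ⟪p, q⟫^2) := Real.sqrt_pos.mpr hs0
  have hkp' : ⟪p, k⟫ = 0 := by rw [real_inner_comm]; exact hkp
  have hqk : 0 ≤ ⟪q, k⟫ := by
    rw [real_inner_comm]; exact (hsupp.1 hqC).2
  have hqks : ⟪q, k⟫ ≤ Real.sqrt (1 - ⟪p, q⟫^2) := by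
    have h1 := real_inner_le_norm (q - ⟪q, p⟫ • p) k
    rw [norm_sub_inner_smul hqn hpn, hkn, mul_one, inner_sub_left, real_inner_smul_left,
      hkp', mul_zero, sub_zero, real_inner_comm p q] at h1
    exact h1
  have hkk' : ⟪k', k⟫ = (Real.sqrt (1 - ⟪p, q⟫^2))⁻¹ * (0 - ⟪p, q⟫ * ⟪q, k⟫) := by
    rw [hform k, hkp']
  have hcosδ : Real.cos (sdiam C) ≤ 0 :=
    Real.cos_nonpos_of_pi_div_two_le_of_le hhalf.le (by linarith [Real.pi_pos])
  have hρδ : Real.arccos ⟪p, q⟫ ≤ sdiam C := hdle p hpC q hqC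
  have hcosρ : Real.cos (sdiam C) ≤ ⟪p, q⟫ := by
    have h1 := Real.cos_le_cos_of_nonneg_of_le_pi (Real.arccos_nonneg _) hδπ hρδ
    rwa [Real.cos_arccos hcm.le hc1.le] at h1
  have hbound : ⟪k', k⟫ ≤ -Real.cos (sdiam C) := by
    rw [hkk']
    rcases le_or_gt 0 ⟪p, q⟫ with hc0 | hc0
    · have h1 : (Real.sqrt (1 - ⟪p, q⟫^2))⁻¹ * (0 - ⟪p, q⟫ * ⟪q, k⟫) ≤ 0 :=
        mul_nonpos_of_nonneg_of_nonpos (inv_nonneg.mpr hspos.le)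
          (by nlinarith)
      linarith
    · have h1 : ⟪p, q⟫ * Real.sqrt (1 - ⟪p, q⟫^2) ≤ ⟪p, q⟫ * ⟪q, k⟫ :=
        mul_le_mul_of_nonpos_left hqks hc0.le
      have h3 := mul_le_mul_of_nonneg_left h1 (inv_nonneg.mpr hspos.le)
      have h2 : (Real.sqrt (1 - ⟪p, q⟫^2))⁻¹ * (⟪p, q⟫ * Real.sqrt (1 - ⟪p, q⟫^2))
          = ⟪p, q⟫ := by
        rw [mul_comm ⟪p, q⟫, ← mul_assoc, inv_mul_cancel₀ hspos.ne', one_mul]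
      rw [h2] at h3
      nlinarith
  have habs : |⟪k', k⟫| ≤ |⟪p, q⟫| := by
    rw [hkk', abs_mul, abs_of_nonneg (inv_nonneg.mpr hspos.le), zero_sub, abs_neg, abs_mul,
      abs_of_nonneg hqk]
    calc (Real.sqrt (1 - ⟪p, q⟫^2))⁻¹ * (|⟪p, q⟫| * ⟪q, k⟫)
        ≤ (Real.sqrt (1 - ⟪p, q⟫^2))⁻¹ * (|⟪p, q⟫| * Real.sqrt (1 - ⟪p, q⟫^2)) := by
          apply mul_le_mul_of_nonneg_left
            (mul_le_mul_of_nonneg_left hqks (abs_nonneg _)) (inv_nonneg.mpr hspos.le)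
      _ = |⟪p, q⟫| := by
          rw [mul_comm (|⟪p, q⟫|), ← mul_assoc, inv_mul_cancel₀ hspos.ne', one_mul]
  have hcabs : |⟪p, q⟫| < 1 := abs_lt.mpr ⟨hcm, hc1⟩
  have hne1 : k' ≠ k := by
    intro hEq
    rw [hEq, inner_self_one hkn] at habs
    rw [abs_one] at habs
    linarith
  have hne2 : k' ≠ -k := by
    intro hEq
    rw [hEq, inner_neg_left, inner_self_one hkn] at habs
    rw [abs_neg, abs_one] at habs
    linarith
  have hbb : BddBelow {w | ∃ k' ∈ Sph d, k' ≠ k ∧ k' ≠ -k ∧ Supports k' C ∧ w = lthick k k'} := by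
    refine ⟨0, ?_⟩
    rintro w ⟨g, -, -, -, -, rfl⟩
    exact lthick_nonneg' _ _
  have hwle : width C k ≤ lthick k k' :=
    csInf_le hbb ⟨k', hk's, hne1, hne2, hk'supp, rfl⟩
  refine le_trans hwle ?_
  have h6 : ⟪k, k'⟫ ≤ -Real.cos (sdiam C) := by
    rw [real_inner_comm]; exact hbound
  have h7 := arccos_anti h6
  rw [Real.arccos_neg, Real.arccos_cos (by linarith) hδπ] at h7
  rw [lthick, sdist]
  linarith


set_option maxHeartbeats 2000000 in
lemma stmt15_part2 {d : ℕ} (C : Set (E d)) (hC : IsBody C) :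
    thick C ≤ sdiam C := by
  obtain ⟨hCs, hCcl, hconv, hint⟩ := hC
  obtain ⟨x0, hx0s, ε, hε, hball⟩ := hint
  have hx0C : x0 ∈ C := hball ⟨mem_ball_self hε, hx0s⟩
  have hx0n : ‖x0‖ = 1 := mem_Sph_iff.mp hx0s
  have hne : C.Nonempty := ⟨x0, hx0C⟩
  have hcpt : IsCompact C := (isCompact_sphere (0 : E d) 1).of_isClosed_subset hCcl hCs
  have hDne : {r | ∃ x ∈ C, ∃ y ∈ C, r = sdist x y}.Nonempty :=
    ⟨sdist x0 x0, x0, hx0C, x0, hx0C, rfl⟩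
  have hDbdd : BddAbove {r | ∃ x ∈ C, ∃ y ∈ C, r = sdist x y} := by
    refine ⟨Real.pi, ?_⟩
    rintro r ⟨x, -, y, -, rfl⟩
    exact sdist_le_pi' x y
  have hdle : ∀ x ∈ C, ∀ y ∈ C, sdist x y ≤ sdiam C := fun x hx y hy =>
    le_csSup hDbdd ⟨x, hx, y, hy, rfl⟩
  have hδ0 : 0 ≤ sdiam C := by
    have h1 := hdle x0 hx0C x0 hx0C
    have h0 := sdist_nonneg' x0 x0
    linarith
  have hδπ : sdiam C ≤ Real.pi := csSup_le hDne (by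
    rintro r ⟨x, -, y, -, rfl⟩
    exact sdist_le_pi' x y)
  have hbb : BddBelow {w | ∃ g ∈ Sph d, ∃ h ∈ Sph d, g ≠ h ∧ g ≠ -h ∧
      C ⊆ Hemi g ∩ Hemi h ∧ w = lthick g h} := by
    refine ⟨0, ?_⟩
    rintro w ⟨g, -, h, -, -, -, -, rfl⟩
    exact lthick_nonneg' _ _
  have hcont : Continuous (fun u : E d × E d => sdist u.1 u.2) := by
    show Continuous fun u : E d × E d => Real.arccos ⟪u.1, u.2⟫
    exact Real.continuous_arccos.comp continuous_inner
  obtain ⟨⟨x, y⟩, hxyC, hmax0⟩ := (hcpt.prod hcpt).exists_isMaxOn (hne.prod hne)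
    hcont.continuousOn
  have hmax := isMaxOn_iff.mp hmax0
  have hxC : x ∈ C := hxyC.1
  have hyC : y ∈ C := hxyC.2
  have hxn : ‖x‖ = 1 := mem_Sph_iff.mp (hCs hxC)
  have hyn : ‖y‖ = 1 := mem_Sph_iff.mp (hCs hyC)
  have hδeq : sdiam C = sdist x y := by
    apply le_antisymm
    · apply csSup_le hDne
      rintro r ⟨z, hz, w, hw, rfl⟩
      exact hmax (z, w) (Set.mk_mem_prod hz hw)
    · exact hdle x hxC y hyC
  rcases eq_or_lt_of_le hδ0 with hδz | hδpos
  · -- the diameter is zero: C is a singleton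
    have hsing : ∀ z ∈ C, z = x0 := by
      intro z hz
      have h1 : sdist z x0 ≤ 0 := by rw [hδz]; exact hdle z hz x0 hx0C
      have h2 : sdist z x0 = 0 := le_antisymm h1 (sdist_nonneg' _ _)
      have h3 : (1:ℝ) ≤ ⟪z, x0⟫ := Real.arccos_eq_zero.mp h2
      have h4 : ⟪z, x0⟫ = 1 := le_antisymm
        (inner_le_one' (mem_Sph_iff.mp (hCs hz)).le hx0n.le) h3
      exact (inner_eq_one_iff_of_norm_eq_one (mem_Sph_iff.mp (hCs hz)) hx0n).mp h4
    rw [← hδz]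
    rcases Nat.eq_zero_or_pos d with hd0 | hd1
    · -- dimension one: there is no admissible lune at all
      subst hd0
      have hTe : {w | ∃ g ∈ Sph 0, ∃ h ∈ Sph 0, g ≠ h ∧ g ≠ -h ∧
          C ⊆ Hemi g ∩ Hemi h ∧ w = lthick g h} = ∅ := by
        rw [Set.eq_empty_iff_forall_notMem]
        rintro w ⟨g, hg, h, hh, hgh, hgh2, -, -⟩
        have hgn := mem_Sph_iff.mp hg
        have hhn := mem_Sph_iff.mp hh
        have h1 : ⟪g, g⟫ = 1 := inner_self_one hgn
        have h2 : ⟪h, h⟫ = 1 := inner_self_one hhn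
        have hcoord : ∀ a b : E 0, ⟪a, b⟫ = a 0 * b 0 := by
          intro a b
          rw [PiLp.inner_apply, Fin.sum_univ_one]
          simp [RCLike.inner_apply, conj_trivial, mul_comm]
        rw [hcoord] at h1 h2
        have h3 : ⟪g, h⟫ = 1 ∨ ⟪g, h⟫ = -1 := by
          rw [hcoord]
          rcases mul_eq_zero.mp (show (g 0 * h 0 - 1) * (g 0 * h 0 + 1) = 0 by nlinarith)
            with h4 | h4
          · left; linarith
          · right; linarith
        rcases h3 with h4 | h4
        · exact hgh ((inner_eq_one_iff_of_norm_eq_one hgn hhn).mp h4)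
        · apply hgh2
          have h5 : ⟪g, -h⟫ = 1 := by rw [inner_neg_right, h4]; norm_num
          exact (inner_eq_one_iff_of_norm_eq_one hgn (by rwa [norm_neg])).mp h5
      show sInf _ ≤ (0:ℝ)
      rw [hTe, Real.sInf_empty]
    · -- dimension at least two: arbitrarily thin lunes through the point
      have hx0ne : x0 ≠ 0 := by
        intro h
        rw [h, norm_zero] at hx0n
        norm_num at hx0n
      obtain ⟨u, huo, hu0⟩ : ∃ u, u ∈ (ℝ ∙ x0)ᗮ ∧ u ≠ 0 := by
        apply Submodule.exists_mem_ne_zero_of_ne_bot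
        intro hbot
        have h2 := Submodule.orthogonal_eq_bot_iff.mp hbot
        have h4 : Module.finrank ℝ (ℝ ∙ x0 : Submodule ℝ (E d)) = 1 :=
          finrank_span_singleton hx0ne
        rw [h2, finrank_top, finrank_euclideanSpace_fin] at h4
        omega
      have hu0' : u ≠ 0 := hu0
      set v : E d := (‖u‖⁻¹ : ℝ) • u with hv
      have hvn : ‖v‖ = 1 := norm_smul_inv_norm (𝕜 := ℝ) hu0'
      have hxv : ⟪x0, v⟫ = 0 := by
        have h5 : ⟪x0, u⟫ = 0 :=
          Submodule.inner_right_of_mem_orthogonal (Submodule.mem_span_singleton_self x0) huo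
        rw [hv, real_inner_smul_right, h5, mul_zero]
      have hvx : ⟪v, x0⟫ = 0 := by rw [real_inner_comm]; exact hxv
      have hkey2 : ∀ ε : ℝ, 0 < ε → ε < Real.pi/2 → thick C ≤ 2*ε := by
        intro ε hε0 hε2
        have hsin : 0 < Real.sin ε := Real.sin_pos_of_pos_of_lt_pi hε0
          (by linarith [Real.pi_pos])
        have hcos : 0 < Real.cos ε := Real.cos_pos_of_mem_Ioo ⟨by linarith [Real.pi_pos], hε2⟩
        set g : E d := Real.sin ε • x0 + Real.cos ε • v with hg
        set h : E d := Real.sin ε • x0 - Real.cos ε • v with hh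
        have hx00 : ⟪x0, x0⟫ = 1 := inner_self_one hx0n
        have hvv : ⟪v, v⟫ = 1 := inner_self_one hvn
        have hggi : ⟪g, g⟫ = 1 := by
          rw [hg]
          simp only [inner_add_left, inner_add_right, real_inner_smul_left,
            real_inner_smul_right, hx00, hvv, hxv, hvx]
          nlinarith [Real.sin_sq_add_cos_sq ε]
        have hhhi : ⟪h, h⟫ = 1 := by
          rw [hh]
          simp only [inner_sub_left, inner_sub_right, real_inner_smul_left,
            real_inner_smul_right, hx00, hvv, hxv, hvx]
          nlinarith [Real.sin_sq_add_cos_sq ε]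
        have hgS : g ∈ Sph d := by
          rw [mem_Sph_iff]
          have h2 : ‖g‖^2 = 1 := by rw [← real_inner_self_eq_norm_sq, hggi]
          nlinarith [norm_nonneg g]
        have hhS : h ∈ Sph d := by
          rw [mem_Sph_iff]
          have h2 : ‖h‖^2 = 1 := by rw [← real_inner_self_eq_norm_sq, hhhi]
          nlinarith [norm_nonneg h]
        have hghv : ⟪g, h⟫ = -Real.cos (2*ε) := by
          rw [hg, hh]
          simp only [inner_add_left, inner_sub_right, real_inner_smul_left,
            real_inner_smul_right, hx00, hvv, hxv, hvx]
          rw [Real.cos_two_mul]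
          nlinarith [Real.sin_sq_add_cos_sq ε]
        have hlth : lthick g h = 2*ε := by
          rw [lthick, sdist, hghv, Real.arccos_neg,
            Real.arccos_cos (by linarith) (by linarith)]
          ring
        have hCsub : C ⊆ Hemi g ∩ Hemi h := by
          intro z hz
          rw [hsing z hz]
          constructor
          · refine ⟨hx0s, ?_⟩
            rw [hg]
            simp only [inner_add_left, real_inner_smul_left, hx00, hvx]
            nlinarith
          · refine ⟨hx0s, ?_⟩
            rw [hh]
            simp only [inner_sub_left, real_inner_smul_left, hx00, hvx]
            nlinarith
        have hneq1 : g ≠ h := by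
          intro hEq
          have h1 : ⟪g, h⟫ = 1 := by rw [← hEq]; exact hggi
          rw [hghv] at h1
          have h2 := Real.cos_lt_cos_of_nonneg_of_le_pi (by linarith : (0:ℝ) ≤ 2*ε)
            (le_refl Real.pi) (by linarith)
          rw [Real.cos_pi] at h2
          linarith
        have hneq2 : g ≠ -h := by
          intro hEq
          have h1 : ⟪g, h⟫ = -1 := by
            rw [hEq, inner_neg_left, hhhi]
          rw [hghv] at h1
          have h2 := Real.cos_lt_cos_of_nonneg_of_le_pi (le_refl (0:ℝ))
            (by linarith : 2*ε ≤ Real.pi) (by linarith)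
          rw [Real.cos_zero] at h2
          linarith
        exact csInf_le hbb ⟨g, hgS, h, hhS, hneq1, hneq2, hCsub, hlth.symm⟩
      by_contra hpos
      push_neg at hpos
      have h1 := hkey2 (min (thick C/4) (Real.pi/4))
        (lt_min (by linarith) (by linarith [Real.pi_pos]))
        (by
          have h2 := min_le_right (thick C/4) (Real.pi/4)
          linarith [Real.pi_pos])
      have h2 := min_le_left (thick C/4) (Real.pi/4)
      linarith
  · -- positive diameter: the two hemispheres touching at a diametral pair
    have hc1 : ⟪x, y⟫ < 1 := by
      by_contra hcon
      push_neg at hcon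
      have h1 : ⟪x, y⟫ = 1 := le_antisymm (inner_le_one' hxn.le hyn.le) hcon
      have h2 : sdist x y = 0 := by rw [sdist, h1, Real.arccos_one]
      rw [hδeq, h2] at hδpos
      linarith
    have hfarx : ∀ w ∈ C, ⟪x, y⟫ ≤ ⟪x, w⟫ := by
      intro w hw
      have h1 : sdist x w ≤ sdist x y := by rw [← hδeq]; exact hdle x hxC w hw
      have h2 := Real.cos_le_cos_of_nonneg_of_le_pi (sdist_nonneg' x w) (sdist_le_pi' x y) h1
      rw [sdist, sdist, Real.cos_arccos (neg_one_le_inner' hxn.le hyn.le)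
        (inner_le_one' hxn.le hyn.le),
        Real.cos_arccos (neg_one_le_inner' hxn.le (mem_Sph_iff.mp (hCs hw)).le)
        (inner_le_one' hxn.le (mem_Sph_iff.mp (hCs hw)).le)] at h2
      exact h2
    have hsxy : sdist y x = sdist x y := by rw [sdist, sdist, real_inner_comm]
    have hfary : ∀ w ∈ C, ⟪y, x⟫ ≤ ⟪y, w⟫ := by
      intro w hw
      have h1 : sdist y w ≤ sdist y x := by
        rw [hsxy, ← hδeq]; exact hdle y hyC w hw
      have h2 := Real.cos_le_cos_of_nonneg_of_le_pi (sdist_nonneg' y w) (sdist_le_pi' y x) h1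
      rw [sdist, sdist, Real.cos_arccos (neg_one_le_inner' hyn.le hxn.le)
        (inner_le_one' hyn.le hxn.le),
        Real.cos_arccos (neg_one_le_inner' hyn.le (mem_Sph_iff.mp (hCs hw)).le)
        (inner_le_one' hyn.le (mem_Sph_iff.mp (hCs hw)).le)] at h2
      exact h2
    obtain ⟨g, hgS, hgsupp, hgform⟩ := support_far hconv hCs hxC hyC hc1 hfarx
    have hc1' : ⟪y, x⟫ < 1 := by rw [real_inner_comm]; exact hc1
    obtain ⟨h, hhS, hhsupp, hhform⟩ := support_far hconv hCs hyC hxC hc1' hfary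
    have hcm : -1 < ⟪x, y⟫ := inner_gt_neg_one hconv hCs hxC hyC
    have hs0 : (0:ℝ) < 1 - ⟪x, y⟫^2 := by nlinarith
    have hspos : 0 < Real.sqrt (1 - ⟪x, y⟫^2) := Real.sqrt_pos.mpr hs0
    have hs2 : Real.sqrt (1 - ⟪x, y⟫^2)^2 = 1 - ⟪x, y⟫^2 := Real.sq_sqrt hs0.le
    have hyx : ⟪y, x⟫ = ⟪x, y⟫ := real_inner_comm x y
    have hhform' : ∀ u : E d, ⟪h, u⟫
        = (Real.sqrt (1 - ⟪x, y⟫^2))⁻¹ * (⟪y, u⟫ - ⟪x, y⟫ * ⟪x, u⟫) := by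
      intro u
      rw [hhform u, hyx]
    have hxh : ⟪x, h⟫ = 0 := by
      rw [real_inner_comm h x, hhform' x, inner_self_one hxn, hyx]
      ring
    have hyh : ⟪y, h⟫ = Real.sqrt (1 - ⟪x, y⟫^2) := by
      have hss : Real.sqrt (1 - ⟪x, y⟫^2) * Real.sqrt (1 - ⟪x, y⟫^2)
          = 1 - ⟪x, y⟫ * ⟪x, y⟫ := by linear_combination hs2
      rw [real_inner_comm h y, hhform' y, inner_self_one hyn, ← hss, ← mul_assoc,
        inv_mul_cancel₀ hspos.ne', one_mul]
    have hgh : ⟪g, h⟫ = -⟪x, y⟫ := by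
      rw [hgform h, hxh, hyh, zero_sub, mul_neg, mul_comm ⟪x, y⟫, ← mul_assoc,
        inv_mul_cancel₀ hspos.ne', one_mul]
    have hlth : lthick g h = sdiam C := by
      rw [lthick, sdist, hgh, Real.arccos_neg, hδeq, sdist]
      ring
    have hgn : ‖g‖ = 1 := mem_Sph_iff.mp hgS
    have hhn : ‖h‖ = 1 := mem_Sph_iff.mp hhS
    have hneq1 : g ≠ h := by
      intro hEq
      have h1 : ⟪g, h⟫ = 1 := by rw [← hEq]; exact inner_self_one hgn
      rw [hgh] at h1
      linarith
    have hneq2 : g ≠ -h := by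
      intro hEq
      have h1 : ⟪g, h⟫ = -1 := by rw [hEq, inner_neg_left, inner_self_one hhn]
      rw [hgh] at h1
      linarith
    have hCsub : C ⊆ Hemi g ∩ Hemi h := fun z hz => ⟨hgsupp.1 hz, hhsupp.1 hz⟩
    exact csInf_le hbb ⟨g, hgS, h, hhS, hneq1, hneq2, hCsub, hlth.symm⟩
/-- for a convex body of diameter greater than `π/2` all widths
are at most the diameter; consequently `Δ(C) ≤ diam(C)` for every convex body. -/
theorem stmt15 {d : ℕ} (C : Set (E d)) (hC : IsBody C) :
    (Real.pi / 2 < sdiam C →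
      sSup {w | ∃ k ∈ Sph d, Supports k C ∧ w = width C k} ≤ sdiam C) ∧
    thick C ≤ sdiam C :=
  ⟨fun hhalf => stmt15_part1 C hC hhalf, stmt15_part2 C hC⟩
end
end

section
/- Let C ⊂ S^d be a convex body whose diameter is realized by points p, q ∈ C. Then the hemisphere K whose boundary great sphere passes through p orthogonally to the arc pq and which contains q supports C. -/
open Set Metric
open scoped RealInnerProductSpace

noncomputable section

variable {d : ℕ}

lemma arith_key (t a b : ℝ) (ht : t < 0) (ha : -1 ≤ a)
    (hcon : b < t * a)
    (H : ∀ l : ℝ, 0 < l → l ≤ 1/3 →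
      t * Real.sqrt ((1-l)^2 + l^2 + 2*l*(1-l)*a) ≤ (1-l)*t + l*b) : False := by
  set A := t * (b - t*a) with hA
  have hApos : 0 < A := by nlinarith
  set B := t^2 - b^2 with hB
  have hBpos : (0:ℝ) < |B| + 1 := by positivity
  set l := min (1/3 : ℝ) (A / (|B| + 1)) with hl
  have hl0 : 0 < l := lt_min (by norm_num) (div_pos hApos hBpos)
  have hl3 : l ≤ 1/3 := min_le_left _ _
  have hlB : l * B < A := by
    have h1 : l ≤ A / (|B| + 1) := min_le_right _ _
    have h2 : l * B ≤ l * |B| := by nlinarith [le_abs_self B, hl0.le]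
    have h3 : l * |B| ≤ (A / (|B|+1)) * |B| := by nlinarith [abs_nonneg B]
    have h4 : (A / (|B|+1)) * |B| < A := by
      rw [div_mul_eq_mul_div, div_lt_iff₀ hBpos]; nlinarith [abs_nonneg B]
    linarith
  have hl1 : l ≤ 1/2 := by linarith
  have hN : (0:ℝ) ≤ (1-l)^2 + l^2 + 2*l*(1-l)*a := by
    nlinarith [mul_nonneg (mul_nonneg hl0.le (by linarith : (0:ℝ) ≤ 1-l)) (by linarith : (0:ℝ) ≤ 1+a), sq_nonneg (1-2*l)]
  have h := H l hl0 hl3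
  have hb : b < -t := by nlinarith
  have hR : (1-l)*t + l*b < 0 := by
    have h1 : l*b < l*(-t) := by nlinarith
    have h2 : (1-2*l)*t < 0 := mul_neg_of_pos_of_neg (by linarith) ht
    nlinarith
  have hs := Real.sq_sqrt hN
  have hsn := Real.sqrt_nonneg ((1-l)^2 + l^2 + 2*l*(1-l)*a)
  have hsq : t^2 * ((1-l)^2 + l^2 + 2*l*(1-l)*a) ≥ ((1-l)*t + l*b)^2 := by
    nlinarith [h, hR, hs, hsn]
  nlinarith [hsq, hl0, hl3, hlB, hApos, mul_pos hl0 hApos]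

/-- if the diameter of a convex body `C` is realized by `p, q`,
then the hemisphere whose boundary passes through `p` orthogonally to the arc
`pq` and which contains `q` supports `C`. Its center is `nrm (q - ⟪p,q⟫ p)`. -/
theorem stmt16 {d : ℕ} (C : Set (E d)) (hC : IsBody C)
    (p q : E d) (hp : p ∈ C) (hq : q ∈ C) (hne : p ≠ q)
    (hd : sdist p q = sdiam C) :
    p ∈ bdHemi (nrm (q - ⟪p, q⟫ • p)) ∧
    q ∈ Hemi (nrm (q - ⟪p, q⟫ • p)) ∧
    Supports (nrm (q - ⟪p, q⟫ • p)) C := by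
  obtain ⟨hCsub, hCcl, ⟨hanti, hcone⟩, hint⟩ := hC
  have hpS : ‖p‖ = 1 := mem_sphere_zero_iff_norm.mp (hCsub hp)
  have hqS : ‖q‖ = 1 := mem_sphere_zero_iff_norm.mp (hCsub hq)
  set t := ⟪p, q⟫ with htdef
  have ht1 : |t| ≤ 1 := by
    have h := abs_real_inner_le_norm p q
    rwa [hpS, hqS, mul_one] at h
  -- diameter bound: every point of C is within sdist p q of q
  have hdiam : ∀ x ∈ C, t ≤ ⟪q, x⟫ := by
    intro x hx
    have hxS : ‖x‖ = 1 := mem_sphere_zero_iff_norm.mp (hCsub hx)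
    have hb1 : |⟪q, x⟫| ≤ 1 := by
      have h := abs_real_inner_le_norm q x
      rwa [hqS, hxS, mul_one] at h
    have hle : sdist q x ≤ sdist p q := by
      rw [hd]
      apply le_csSup
      · refine ⟨Real.pi, ?_⟩
        rintro r ⟨u, _, v, _, rfl⟩
        exact Real.arccos_le_pi _
      · exact ⟨q, hq, x, hx, rfl⟩
    by_contra hlt
    push_neg at hlt
    have habs := abs_le.mp ht1
    have habs2 := abs_le.mp hb1
    have := Real.strictAntiOn_arccos ⟨habs2.1, habs2.2⟩ ⟨habs.1, habs.2⟩ hlt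
    unfold sdist at hle
    linarith
  -- the main claim: C lies in the hemisphere
  have hmain : ∀ x ∈ C, t * ⟪p, x⟫ ≤ ⟪q, x⟫ := by
    intro x hx
    have hxS : ‖x‖ = 1 := mem_sphere_zero_iff_norm.mp (hCsub hx)
    set a := ⟪p, x⟫ with hadef
    set b := ⟪q, x⟫ with hbdef
    have ha1 : |a| ≤ 1 := by
      have h := abs_real_inner_le_norm p x
      rwa [hpS, hxS, mul_one] at h
    have habs := abs_le.mp ha1
    have hbt : t ≤ b := hdiam x hx
    rcases le_or_gt 0 t with htpos | htneg
    · nlinarith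
    · by_contra hcon
      push_neg at hcon
      refine arith_key t a b htneg habs.1 hcon ?_
      intro l hl0 hl3
      set w := (1-l) • p + l • x with hwdef
      have h1 : ‖(1-l:ℝ) • p‖ = 1 - l := by
        rw [norm_smul, hpS, mul_one, Real.norm_eq_abs, abs_of_nonneg (by linarith)]
      have h2 : ‖(l:ℝ) • x‖ = l := by
        rw [norm_smul, hxS, mul_one, Real.norm_eq_abs, abs_of_nonneg hl0.le]
      have h3 : ⟪(1-l:ℝ) • p, (l:ℝ) • x⟫ = (1-l) * (l * a) := by
        rw [real_inner_smul_left, real_inner_smul_right]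
      have hw2 : ‖w‖^2 = (1-l)^2 + l^2 + 2*l*(1-l)*a := by
        rw [hwdef, @norm_add_sq_real, h1, h2, h3]; ring
      have hNpos : (0:ℝ) < (1-l)^2 + l^2 + 2*l*(1-l)*a := by
        nlinarith [mul_nonneg (mul_nonneg hl0.le (by linarith : (0:ℝ) ≤ 1-l)) (by linarith : (0:ℝ) ≤ 1+a), sq_nonneg (1-2*l)]
      have hwpos : 0 < ‖w‖ := by nlinarith [norm_nonneg w]
      have hsqrt : Real.sqrt ((1-l)^2 + l^2 + 2*l*(1-l)*a) = ‖w‖ := by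
        rw [← hw2, Real.sqrt_sq (norm_nonneg w)]
      -- w lies on the cone over C
      have hpc : p ∈ {v : E d | ∃ r : ℝ, 0 ≤ r ∧ ∃ y ∈ C, v = r • y} :=
        ⟨1, zero_le_one, p, hp, (one_smul _ _).symm⟩
      have hxc : x ∈ {v : E d | ∃ r : ℝ, 0 ≤ r ∧ ∃ y ∈ C, v = r • y} :=
        ⟨1, zero_le_one, x, hx, (one_smul _ _).symm⟩
      have hwc := hcone hpc hxc (by linarith : (0:ℝ) ≤ 1-l) hl0.le (by ring)
      obtain ⟨r, hr, z, hz, hwz⟩ := hwc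
      have hzS : ‖z‖ = 1 := mem_sphere_zero_iff_norm.mp (hCsub hz)
      have hwr : ‖w‖ = r := by
        rw [show w = r • z from hwz, norm_smul, hzS, mul_one, Real.norm_eq_abs,
          abs_of_nonneg hr]
      have hqz : t ≤ ⟪q, z⟫ := hdiam z hz
      have hqw : ⟪q, w⟫ = (1-l)*t + l*b := by
        rw [hwdef, inner_add_right, real_inner_smul_right, real_inner_smul_right,
          real_inner_comm p q, ← htdef, ← hbdef]
      have hqw2 : ⟪q, w⟫ = ‖w‖ * ⟪q, z⟫ := by
        rw [hwr, show w = r • z from hwz, real_inner_smul_right]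
      calc t * Real.sqrt ((1-l)^2 + l^2 + 2*l*(1-l)*a) = t * ‖w‖ := by rw [hsqrt]
        _ ≤ ‖w‖ * ⟪q, z⟫ := by nlinarith
        _ = (1-l)*t + l*b := by rw [← hqw2, hqw]
  -- computations with the center
  set v := q - t • p with hvdef
  have hvp : ⟪v, p⟫ = 0 := by
    rw [hvdef, inner_sub_left, real_inner_smul_left, real_inner_comm p q, ← htdef,
      real_inner_self_eq_norm_sq, hpS]
    ring
  have hvq : ⟪v, q⟫ = 1 - t^2 := by
    rw [hvdef, inner_sub_left, real_inner_smul_left, ← htdef,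
      real_inner_self_eq_norm_sq, hqS]
    ring
  have hksmul : ∀ y : E d, ⟪nrm v, y⟫ = ‖v‖⁻¹ * ⟪v, y⟫ := by
    intro y; rw [nrm, real_inner_smul_left]
  have hinv : (0:ℝ) ≤ ‖v‖⁻¹ := by positivity
  have hCK : C ⊆ Hemi (nrm v) := by
    intro x hx
    refine ⟨hCsub hx, ?_⟩
    rw [hksmul]
    have hvx : ⟪v, x⟫ = ⟪q, x⟫ - t * ⟪p, x⟫ := by
      rw [hvdef, inner_sub_left, real_inner_smul_left]
    have := hmain x hx
    have : 0 ≤ ⟪v, x⟫ := by rw [hvx]; linarith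
    positivity
  refine ⟨⟨hCsub hp, by rw [hksmul, hvp, mul_zero]⟩, ?_, hCK, ⟨p, ?_, hp⟩⟩
  · refine ⟨hCsub hq, ?_⟩
    rw [hksmul, hvq]
    have habs := abs_le.mp ht1
    exact mul_nonneg hinv (by nlinarith)
  · exact ⟨hCsub hp, by rw [hksmul, hvp, mul_zero]⟩
end
end

section
/- Let C ⊂ S^d be a convex body. If diam(C) < π/2, then any two points of C at distance diam(C) are both extreme points of C. Moreover, every convex body of diameter exactly π/2 contains a pair of extreme points at distance π/2. -/
open Set Metric
open scoped RealInnerProductSpace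

noncomputable section

variable {d : ℕ}

def coneS (A : Set (E d)) : Set (E d) := {v : E d | ∃ r : ℝ, 0 ≤ r ∧ ∃ x ∈ A, v = r • x}

lemma sphConvex_iff {C : Set (E d)} : SphConvex C ↔ (∀ x ∈ C, -x ∉ C) ∧ Convex ℝ (coneS C) := Iff.rfl

lemma smul_mem_coneS {A : Set (E d)} {x : E d} (hx : x ∈ A) {r : ℝ} (hr : 0 ≤ r) :
    r • x ∈ coneS A := ⟨r, hr, x, hx, rfl⟩

lemma norm_of_mem_sph {x : E d} (h : x ∈ Sph d) : ‖x‖ = 1 :=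
  mem_sphere_zero_iff_norm.mp h

lemma unit_smul_eq {r s : ℝ} {x y : E d} (hx : ‖x‖ = 1) (hy : ‖y‖ = 1)
    (hr : 0 < r) (hs : 0 ≤ s) (h : r • x = s • y) : r = s ∧ x = y := by
  have hrs : r = s := by
    have h2 := congrArg norm h
    rwa [norm_smul, norm_smul, hx, hy, mul_one, mul_one, Real.norm_eq_abs, Real.norm_eq_abs,
      abs_of_pos hr, abs_of_nonneg hs] at h2
  subst hrs
  exact ⟨rfl, smul_right_injective (E d) hr.ne' h⟩

lemma exists_rep {A : Set (E d)} (hA : A ⊆ Sph d) (hconv : Convex ℝ (coneS A))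
    {e : E d} (hne : ¬ Convex ℝ (coneS (A \ {e}))) :
    ∃ a ∈ A \ {e}, ∃ b ∈ A \ {e}, ∃ α β ρ : ℝ, 0 < α ∧ 0 < β ∧ 0 < ρ ∧ a ≠ b ∧
      α • a + β • b = ρ • e := by
  simp only [Convex, StarConvex] at hne
  push_neg at hne
  obtain ⟨v, hv, w, hw, t, s, ht, hs, hts, hnot⟩ := hne
  obtain ⟨r₁, hr₁, a, ha, rfl⟩ := hv
  obtain ⟨r₂, hr₂, b, hb, rfl⟩ := hw
  have hm : t • (r₁ • a) + s • (r₂ • b) = (t * r₁) • a + (s * r₂) • b := by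
    rw [smul_smul, smul_smul]
  have hmA : t • (r₁ • a) + s • (r₂ • b) ∈ coneS A :=
    hconv (smul_mem_coneS ha.1 hr₁) (smul_mem_coneS hb.1 hr₂) ht hs hts
  obtain ⟨r, hr, z, hz, hzeq⟩ := hmA
  have hr0 : 0 < r := by
    rcases hr.lt_or_eq with h' | h'
    · exact h'
    · exfalso
      exact hnot ⟨0, le_rfl, a, ha, by rw [hzeq, ← h', zero_smul, zero_smul]⟩
  have hze : z = e := by
    by_contra hze'
    exact hnot ⟨r, hr, z, ⟨hz, by simpa using hze'⟩, hzeq⟩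
  subst hze
  have hα : 0 < t * r₁ := by
    rcases (mul_nonneg ht hr₁).lt_or_eq with h' | h'
    · exact h'
    · exfalso
      refine hnot ⟨s * r₂, mul_nonneg hs hr₂, b, hb, ?_⟩
      rw [hm, ← h', zero_smul, zero_add]
  have hβ : 0 < s * r₂ := by
    rcases (mul_nonneg hs hr₂).lt_or_eq with h' | h'
    · exact h'
    · exfalso
      refine hnot ⟨t * r₁, mul_nonneg ht hr₁, a, ha, ?_⟩
      rw [hm, ← h', zero_smul, add_zero]
  have heq : (t * r₁) • a + (s * r₂) • b = r • z := by rw [← hm, hzeq]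
  have hab : a ≠ b := by
    rintro rfl
    have h2 : (t * r₁ + s * r₂) • a = r • z := by rw [add_smul, heq]
    have := (unit_smul_eq (norm_of_mem_sph (hA ha.1)) (norm_of_mem_sph (hA hz))
      (by linarith) hr h2).2
    exact ha.2 (by simpa using this)
  exact ⟨a, ha, b, hb, t * r₁, s * r₂, r, hα, hβ, hr0, hab, heq⟩

lemma inner_bounds {x y : E d} (hx : ‖x‖ = 1) (hy : ‖y‖ = 1) :
    -1 ≤ ⟪x, y⟫ ∧ ⟪x, y⟫ ≤ 1 := by
  have h := abs_real_inner_le_norm x y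
  rw [hx, hy, mul_one] at h
  exact abs_le.mp h

lemma cos_sdist {x y : E d} (hx : ‖x‖ = 1) (hy : ‖y‖ = 1) :
    Real.cos (sdist x y) = ⟪x, y⟫ :=
  Real.cos_arccos (inner_bounds hx hy).1 (inner_bounds hx hy).2

lemma cos_le_inner {x y : E d} (hx : ‖x‖ = 1) (hy : ‖y‖ = 1) {D : ℝ}
    (hDpi : D ≤ Real.pi) (h : sdist x y ≤ D) : Real.cos D ≤ ⟪x, y⟫ := by
  have h0 : 0 ≤ D := le_trans (Real.arccos_nonneg _) h
  have h2 := Real.strictAntiOn_cos.antitoneOn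
    ⟨Real.arccos_nonneg (⟪x, y⟫), Real.arccos_le_pi _⟩ ⟨h0, hDpi⟩ h
  rwa [show Real.arccos ⟪x, y⟫ = sdist x y from rfl, cos_sdist hx hy] at h2

lemma sdist_comm (x y : E d) : sdist x y = sdist y x := by
  rw [sdist, sdist, real_inner_comm]

/-- Key inequality step for diametral points. -/
lemma diametral_cone_convex {C : Set (E d)} (hCs : C ⊆ Sph d)
    (hconv : Convex ℝ (coneS C)) {D : ℝ} (hD : D < Real.pi / 2)
    (hdd : ∀ x ∈ C, ∀ y ∈ C, sdist x y ≤ D) {p q : E d} (hp : p ∈ C) (hq : q ∈ C)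
    (hpq : sdist p q = D) : Convex ℝ (coneS (C \ {p})) := by
  by_contra hnc
  obtain ⟨a, ha, b, hb, α, β, ρ, hα, hβ, hρ, hab, heq⟩ := exists_rep hCs hconv hnc
  have hpn := norm_of_mem_sph (hCs hp)
  have hqn := norm_of_mem_sph (hCs hq)
  have han := norm_of_mem_sph (hCs ha.1)
  have hbn := norm_of_mem_sph (hCs hb.1)
  have hD0 : 0 ≤ D := hpq ▸ Real.arccos_nonneg _
  have hDpi : D ≤ Real.pi := by linarith [Real.pi_pos]
  have hcosD : 0 < Real.cos D :=
    Real.cos_pos_of_mem_Ioo ⟨by linarith [Real.pi_pos], hD⟩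
  have hpq' : ⟪p, q⟫ = Real.cos D := by rw [← cos_sdist hpn hqn, hpq]
  have haq : Real.cos D ≤ ⟪a, q⟫ := cos_le_inner han hqn hDpi (hdd a ha.1 q hq)
  have hbq : Real.cos D ≤ ⟪b, q⟫ := cos_le_inner hbn hqn hDpi (hdd b hb.1 q hq)
  -- inner of the representation with q
  have hinner : α * ⟪a, q⟫ + β * ⟪b, q⟫ = ρ * Real.cos D := by
    have h := congrArg (fun v : E d => (inner ℝ v q : ℝ)) heq
    simp only [inner_add_left, real_inner_smul_left] at h
    rw [hpq'] at h
    exact h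
  have hge : α + β ≤ ρ := by
    have h1 : (α + β) * Real.cos D ≤ ρ * Real.cos D := by
      rw [← hinner]; nlinarith
    exact le_of_mul_le_mul_right (by linarith) hcosD
  have hle : ρ ≤ α + β := by
    have h1 : ‖α • a + β • b‖ = ρ := by
      rw [heq, norm_smul, hpn, mul_one, Real.norm_eq_abs, abs_of_pos hρ]
    calc ρ = ‖α • a + β • b‖ := h1.symm
    _ ≤ ‖α • a‖ + ‖β • b‖ := norm_add_le _ _
    _ = α + β := by
        rw [norm_smul, norm_smul, han, hbn, mul_one, mul_one, Real.norm_eq_abs,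
          Real.norm_eq_abs, abs_of_pos hα, abs_of_pos hβ]
  have hρeq : ρ = α + β := le_antisymm hle hge
  have hab1 : ⟪a, b⟫ < 1 := by
    rcases lt_or_eq_of_le (inner_bounds han hbn).2 with h' | h'
    · exact h'
    · exact absurd ((inner_eq_one_iff_of_norm_eq_one han hbn).mp h') hab
  have hnsq : ‖α • a + β • b‖ ^ 2 = α ^ 2 + 2 * (α * β * ⟪a, b⟫) + β ^ 2 := by
    rw [norm_add_sq_real, norm_smul, norm_smul, han, hbn, real_inner_smul_left,
      real_inner_smul_right]
    ring_nf
    simp [Real.norm_eq_abs, abs_of_pos hα, abs_of_pos hβ]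
    ring
  have h2 : ‖α • a + β • b‖ = ρ := by
    rw [heq, norm_smul, hpn, mul_one, Real.norm_eq_abs, abs_of_pos hρ]
  rw [h2, hρeq] at hnsq
  nlinarith [mul_pos (mul_pos hα hβ) (show (0:ℝ) < 1 - ⟪a, b⟫ by linarith)]

/-- The face of `C` cut by `⟪w,·⟫ = 0` has a convex cone. -/
lemma face_cone_convex {C : Set (E d)} (hconv : Convex ℝ (coneS C)) (w : E d)
    (hpos : ∀ x ∈ C, 0 ≤ ⟪w, x⟫) :
    Convex ℝ (coneS {x ∈ C | ⟪w, x⟫ = 0}) := by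
  rintro v₁ ⟨r₁, hr₁, x₁, ⟨hx₁C, hx₁w⟩, rfl⟩ v₂ ⟨r₂, hr₂, x₂, ⟨hx₂C, hx₂w⟩, rfl⟩ t s ht hs hts
  have hmA : t • (r₁ • x₁) + s • (r₂ • x₂) ∈ coneS C :=
    hconv (smul_mem_coneS hx₁C hr₁) (smul_mem_coneS hx₂C hr₂) ht hs hts
  obtain ⟨r, hr, z, hz, hzeq⟩ := hmA
  rcases hr.lt_or_eq with hr0 | hr0
  · have hwm : (r : ℝ) * ⟪w, z⟫ = 0 := by
      have h := congrArg (fun v : E d => (inner ℝ w v : ℝ)) hzeq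
      simp only [inner_add_right, real_inner_smul_right] at h
      rw [hx₁w, hx₂w] at h
      simpa using h.symm
    have hwz : ⟪w, z⟫ = 0 := by
      rcases mul_eq_zero.mp hwm with h' | h'
      · exact absurd h' hr0.ne'
      · exact h'
    exact ⟨r, hr, z, ⟨hz, hwz⟩, hzeq⟩
  · exact ⟨0, le_rfl, x₁, ⟨hx₁C, hx₁w⟩, by rw [hzeq, ← hr0, zero_smul, zero_smul]⟩

/-- A spherically extreme point of the face cut by `⟪w,·⟫ = 0` is extreme in `C`. -/
lemma face_extreme {C : Set (E d)} (hCs : C ⊆ Sph d) (hconv : Convex ℝ (coneS C))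
    (w : E d) (hpos : ∀ x ∈ C, 0 ≤ ⟪w, x⟫) {e : E d} (heC : e ∈ C) (hew : ⟪w, e⟫ = 0)
    (hF : Convex ℝ (coneS ({x ∈ C | ⟪w, x⟫ = 0} \ {e}))) :
    Convex ℝ (coneS (C \ {e})) := by
  by_contra hnc
  obtain ⟨a, ha, b, hb, α, β, ρ, hα, hβ, hρ, hab, heq⟩ := exists_rep hCs hconv hnc
  have hinner : α * ⟪w, a⟫ + β * ⟪w, b⟫ = 0 := by
    have h := congrArg (fun v : E d => (inner ℝ w v : ℝ)) heq
    simp only [inner_add_right, real_inner_smul_right] at h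
    rw [hew] at h
    simpa using h
  have hwa : ⟪w, a⟫ = 0 := by
    have h1 := hpos a ha.1
    have h2 := hpos b hb.1
    nlinarith
  have hwb : ⟪w, b⟫ = 0 := by
    have h1 := hpos a ha.1
    nlinarith
  -- now contradict convexity of the cone of the face minus e
  have hmem : ((α + β)⁻¹ * ρ) • e ∈ coneS ({x ∈ C | ⟪w, x⟫ = 0} \ {e}) := by
    have h1 : (α / (α + β)) • a + (β / (α + β)) • b = ((α + β)⁻¹ * ρ) • e := by
      rw [div_eq_mul_inv, div_eq_mul_inv, mul_comm α, mul_comm β, ← smul_smul, ← smul_smul,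
        ← smul_add, heq, smul_smul]
    have hane : (a : E d) ∈ ({x ∈ C | ⟪w, x⟫ = 0} \ {e}) := ⟨⟨ha.1, hwa⟩, ha.2⟩
    have hbne : (b : E d) ∈ ({x ∈ C | ⟪w, x⟫ = 0} \ {e}) := ⟨⟨hb.1, hwb⟩, hb.2⟩
    have hmema : (a : E d) ∈ coneS ({x ∈ C | ⟪w, x⟫ = 0} \ {e}) :=
      ⟨1, zero_le_one, a, hane, (one_smul _ _).symm⟩
    have hmemb : (b : E d) ∈ coneS ({x ∈ C | ⟪w, x⟫ = 0} \ {e}) :=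
      ⟨1, zero_le_one, b, hbne, (one_smul _ _).symm⟩
    have hsum : α / (α + β) + β / (α + β) = 1 := by
      field_simp
    have h2 := hF hmema hmemb (le_of_lt (div_pos hα (by linarith)))
      (le_of_lt (div_pos hβ (by linarith))) hsum
    rwa [h1] at h2
  obtain ⟨r', hr', z, ⟨⟨hzC, hzw⟩, hze⟩, hzeq⟩ := hmem
  have hc : 0 < (α + β)⁻¹ * ρ := mul_pos (inv_pos.mpr (by linarith)) hρ
  have hr'0 : 0 < r' := by
    rcases hr'.lt_or_eq with h' | h'
    · exact h'
    · exfalso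
      rw [← h', zero_smul] at hzeq
      have := congrArg norm hzeq
      rw [norm_smul, norm_of_mem_sph (hCs heC), mul_one, Real.norm_eq_abs,
        abs_of_pos hc, norm_zero] at this
      exact hc.ne' this
  have := (unit_smul_eq (norm_of_mem_sph (hCs heC)) (norm_of_mem_sph (hCs hzC))
    hc hr' hzeq).2
  exact hze (by simpa using this.symm)

/-- Existence of a spherically extreme point of a nonempty compact spherically
convex set contained in an open hemisphere. -/
lemma exists_extreme {F : Set (E d)} (hFs : F ⊆ Sph d) (hcl : IsClosed F)
    (hne : F.Nonempty) (hconv : Convex ℝ (coneS F)) (u : E d)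
    (hu : ∀ x ∈ F, 0 < ⟪u, x⟫) :
    ∃ e ∈ F, Convex ℝ (coneS (F \ {e})) := by
  have hFc : IsCompact F :=
    (isCompact_sphere (0 : E d) 1).of_isClosed_subset hcl hFs
  set g : E d → E d := fun x => (⟪u, x⟫)⁻¹ • x with hg
  set B : Set (E d) := g '' F with hB
  have hgcont : ContinuousOn g F := by
    refine ContinuousOn.smul (f := fun x => (⟪u, x⟫)⁻¹) (g := fun x => x) ?_ ?_
    · exact ((continuous_const.inner continuous_id).continuousOn).inv₀
        fun x hx => (hu x hx).ne'
    · exact continuousOn_id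
  have hBc : IsCompact B := hFc.image_of_continuousOn hgcont
  have hBne : B.Nonempty := hne.image g
  have hinner_g : ∀ x ∈ F, ⟪u, g x⟫ = 1 := by
    intro x hx
    rw [hg]
    simp only [real_inner_smul_right]
    exact inv_mul_cancel₀ (hu x hx).ne'
  have hgcone : ∀ x ∈ F, g x ∈ coneS F := fun x hx =>
    smul_mem_coneS hx (inv_nonneg.mpr (hu x hx).le)
  have hBconv : Convex ℝ B := by
    rintro p₁ ⟨x₁, hx₁, rfl⟩ p₂ ⟨x₂, hx₂, rfl⟩ t s ht hs hts
    have hmF : t • g x₁ + s • g x₂ ∈ coneS F :=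
      hconv (hgcone x₁ hx₁) (hgcone x₂ hx₂) ht hs hts
    obtain ⟨r, hr, z, hz, hzeq⟩ := hmF
    have h1 : ⟪u, t • g x₁ + s • g x₂⟫ = 1 := by
      simp only [inner_add_right, real_inner_smul_right, hinner_g x₁ hx₁, hinner_g x₂ hx₂]
      simpa using hts
    rw [hzeq] at h1
    simp only [real_inner_smul_right] at h1
    have hr0 : r ≠ 0 := by
      intro h'
      rw [h', zero_mul] at h1
      exact one_ne_zero h1.symm
    have hrz : r = (⟪u, z⟫)⁻¹ := eq_inv_of_mul_eq_one_left (by rw [mul_comm] at h1 ⊢; exact h1)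
    have hgz : g z = r • z := by
      simp only [hg]
      rw [hrz]
    exact ⟨z, hz, by rw [hgz, ← hzeq]⟩
  obtain ⟨e', he'⟩ := hBc.extremePoints_nonempty hBne
  obtain ⟨e, heF, hge⟩ := he'.1
  refine ⟨e, heF, ?_⟩
  by_contra hnc
  obtain ⟨a, ha, b, hb, α, β, ρ, hα, hβ, hρ, hab, heq⟩ := exists_rep hFs hconv hnc
  have hua := hu a ha.1
  have hub := hu b hb.1
  have hue := hu e heF
  set k : ℝ := (ρ * ⟪u, e⟫)⁻¹ with hk
  have hk0 : 0 < k := inv_pos.mpr (mul_pos hρ hue)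
  set c₁ : ℝ := α * ⟪u, a⟫ * k with hc₁
  set c₂ : ℝ := β * ⟪u, b⟫ * k with hc₂
  have hc₁0 : 0 < c₁ := mul_pos (mul_pos hα hua) hk0
  have hc₂0 : 0 < c₂ := mul_pos (mul_pos hβ hub) hk0
  have hinsum : α * ⟪u, a⟫ + β * ⟪u, b⟫ = ρ * ⟪u, e⟫ := by
    have h := congrArg (fun v : E d => (inner ℝ u v : ℝ)) heq
    simp only [inner_add_right, real_inner_smul_right] at h
    exact h
  have hsum : c₁ + c₂ = 1 := by
    rw [hc₁, hc₂, ← add_mul, hinsum, hk]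
    exact mul_inv_cancel₀ (mul_pos hρ hue).ne'
  have hcomb : c₁ • g a + c₂ • g b = e' := by
    rw [← hge, hg]
    simp only
    rw [smul_smul, smul_smul, hc₁, hc₂]
    have key : ∀ cst t : ℝ, t ≠ 0 → cst * t * k * t⁻¹ = cst * k := by
      intro cst t ht
      field_simp
    have h1 : α * ⟪u, a⟫ * k * ⟪u, a⟫⁻¹ = α * k := key α _ hua.ne'
    have h2 : β * ⟪u, b⟫ * k * ⟪u, b⟫⁻¹ = β * k := key β _ hub.ne'
    rw [h1, h2, mul_comm α k, mul_comm β k, ← smul_smul, ← smul_smul, ← smul_add, heq,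
      smul_smul, hk]
    congr 1
    rw [mul_inv, mul_comm ρ⁻¹, mul_assoc, inv_mul_cancel₀ hρ.ne', mul_one]
  have hseg : e' ∈ openSegment ℝ (g a) (g b) := ⟨c₁, c₂, hc₁0, hc₂0, hsum, hcomb⟩
  have hres := he'.2 ⟨a, ha.1, rfl⟩ ⟨b, hb.1, rfl⟩ hseg
  have hae : a = e := by
    have h1 : (⟪u, a⟫)⁻¹ • a = (⟪u, e⟫)⁻¹ • e := by rw [← hge] at hres; exact hres
    exact (unit_smul_eq (norm_of_mem_sph (hFs ha.1)) (norm_of_mem_sph (hFs heF))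
      (inv_pos.mpr hua) (inv_nonneg.mpr hue.le) h1).2
  exact ha.2 (by simpa using hae)



lemma mem_sph_of_norm {x : E d} (h : ‖x‖ = 1) : x ∈ Sph d :=
  mem_sphere_zero_iff_norm.mpr h

lemma sph_anti_subset {A B : Set (E d)} (h : A ⊆ B) (hB : ∀ x ∈ B, -x ∉ B) :
    ∀ x ∈ A, -x ∉ A := fun x hx hxa => hB x (h hx) (h hxa)

/-- An interior point of a set of diameter at most `π/2` makes a positive inner
product with every point of the set. -/
lemma interior_inner_pos {C : Set (E d)} (hCs : C ⊆ Sph d) {c : E d}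
    (hc : c ∈ sInterior C) (hdd : ∀ x ∈ C, ∀ y ∈ C, sdist x y ≤ Real.pi / 2) :
    ∀ x ∈ C, 0 < ⟪c, x⟫ := by
  obtain ⟨hcS, ε, hε, hball⟩ := hc
  have hcC : c ∈ C := hball ⟨mem_ball_self hε, hcS⟩
  have hcn : ‖c‖ = 1 := norm_of_mem_sph hcS
  intro x hx
  have hxn := norm_of_mem_sph (hCs hx)
  have hpi2 : Real.pi / 2 ≤ Real.pi := by linarith [Real.pi_pos]
  have h0 : 0 ≤ ⟪c, x⟫ := by
    have := cos_le_inner hcn hxn hpi2 (hdd c hcC x hx)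
    rwa [Real.cos_pi_div_two] at this
  rcases h0.lt_or_eq with h | h
  · exact h
  exfalso
  have hcx0 : ⟪c, x⟫ = 0 := h.symm
  set gg : ℝ → E d := fun t => ‖c - t • x‖⁻¹ • (c - t • x) with hgg
  have hcnz : ∀ t : ℝ, c - t • x ≠ 0 := by
    intro t h'
    have hct : c = t • x := by rwa [sub_eq_zero] at h'
    have ht : ⟪c, x⟫ = t := by
      rw [hct, real_inner_smul_left, real_inner_self_eq_norm_sq, hxn]
      ring
    rw [hcx0] at ht
    rw [hct, ← ht, zero_smul] at hcn
    simp at hcn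
  have h1 : Continuous fun t : ℝ => c - t • x := by
    exact continuous_const.sub (continuous_id.smul continuous_const)
  have hgcont : ContinuousAt gg 0 := by
    refine ContinuousAt.smul (f := fun t : ℝ => ‖c - t • x‖⁻¹) (g := fun t : ℝ => c - t • x) ?_ ?_
    · apply ContinuousAt.inv₀
      · exact h1.norm.continuousAt
      · simp [hcn]
    · exact h1.continuousAt
  have hg0 : gg 0 = c := by simp [hgg, hcn]
  obtain ⟨δ, hδ, hδε⟩ := Metric.continuousAt_iff.mp hgcont ε hε
  set t : ℝ := δ / 2 with htdef
  have ht0 : 0 < t := by positivity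
  have hdist : dist (gg t) c < ε := by
    rw [← hg0]
    apply hδε
    rw [Real.dist_eq]
    rw [sub_zero, abs_of_pos ht0]
    linarith
  have hgS : gg t ∈ Sph d := by
    apply mem_sph_of_norm
    rw [hgg]
    simp only
    rw [norm_smul, Real.norm_eq_abs, abs_inv, abs_norm]
    exact inv_mul_cancel₀ (norm_ne_zero_iff.mpr (hcnz t))
  have hgC : gg t ∈ C := hball ⟨Metric.mem_ball.mpr hdist, hgS⟩
  have hneg : ⟪gg t, x⟫ < 0 := by
    have hval : ⟪gg t, x⟫ = ‖c - t • x‖⁻¹ * (0 - t) := by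
      rw [hgg]
      simp only
      rw [real_inner_smul_left, inner_sub_left, real_inner_smul_left,
        real_inner_self_eq_norm_sq, hxn, hcx0]
      ring_nf
    rw [hval]
    have : 0 < ‖c - t • x‖⁻¹ := inv_pos.mpr (norm_pos_iff.mpr (hcnz t))
    nlinarith
  have hge0 : 0 ≤ ⟪gg t, x⟫ := by
    have := cos_le_inner (norm_of_mem_sph hgS) hxn hpi2 (hdd _ hgC x hx)
    rwa [Real.cos_pi_div_two] at this
  linarith


/-- in a convex body of diameter `< π/2` every diametral pair
consists of extreme points; every convex body of diameter `π/2` contains a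
pair of extreme points at distance `π/2`. -/
theorem stmt17 {d : ℕ} (C : Set (E d)) (hC : IsBody C) :
    (sdiam C < Real.pi / 2 →
      ∀ p ∈ C, ∀ q ∈ C, sdist p q = sdiam C →
        ExtremePt C p ∧ ExtremePt C q) ∧
    (sdiam C = Real.pi / 2 →
      ∃ p q : E d, ExtremePt C p ∧ ExtremePt C q ∧ sdist p q = Real.pi / 2) := by
  obtain ⟨hCs, hCcl, ⟨hCanti, hCcone⟩, hCint⟩ := hC
  have hCcone' : Convex ℝ (coneS C) := hCcone
  obtain ⟨c, hcS, ε₀, hε₀, hball₀⟩ := hCint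
  have hcint : c ∈ sInterior C := ⟨hcS, ε₀, hε₀, hball₀⟩
  have hcC : c ∈ C := hball₀ ⟨mem_ball_self hε₀, hcS⟩
  have hCne : C.Nonempty := ⟨c, hcC⟩
  have hnorm : ∀ x ∈ C, ‖x‖ = 1 := fun x hx => norm_of_mem_sph (hCs hx)
  have hsdist_le : ∀ x ∈ C, ∀ y ∈ C, sdist x y ≤ sdiam C := by
    intro x hx y hy
    apply le_csSup
    · exact ⟨Real.pi, by rintro r ⟨x', _, y', _, rfl⟩; exact Real.arccos_le_pi _⟩
    · exact ⟨x, hx, y, hy, rfl⟩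
  constructor
  · -- Part 1
    intro hD p hp q hq hpq
    have hdd : ∀ x ∈ C, ∀ y ∈ C, sdist x y ≤ sdiam C := hsdist_le
    have h1 : Convex ℝ (coneS (C \ {p})) :=
      diametral_cone_convex hCs hCcone' hD hdd hp hq hpq
    have h2 : Convex ℝ (coneS (C \ {q})) :=
      diametral_cone_convex hCs hCcone' hD hdd hq hp (by rw [sdist_comm]; exact hpq)
    exact ⟨⟨hp, sph_anti_subset diff_subset hCanti, h1⟩,
      ⟨hq, sph_anti_subset diff_subset hCanti, h2⟩⟩
  · -- Part 2
    intro hD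
    have hdd2 : ∀ x ∈ C, ∀ y ∈ C, sdist x y ≤ Real.pi / 2 := by
      intro x hx y hy
      rw [← hD]
      exact hsdist_le x hx y hy
    have hu := interior_inner_pos hCs hcint hdd2
    have hcompC : IsCompact C :=
      (isCompact_sphere (0 : E d) 1).of_isClosed_subset hCcl hCs
    have hcont : Continuous fun pq : E d × E d => sdist pq.1 pq.2 :=
      Real.continuous_arccos.comp (continuous_fst.inner continuous_snd)
    have hSeq : {r | ∃ x ∈ C, ∃ y ∈ C, r = sdist x y} =
        (fun pq : E d × E d => sdist pq.1 pq.2) '' (C ×ˢ C) := by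
      ext r
      constructor
      · rintro ⟨x, hx, y, hy, rfl⟩
        exact ⟨(x, y), ⟨hx, hy⟩, rfl⟩
      · rintro ⟨⟨x, y⟩, ⟨hx, hy⟩, rfl⟩
        exact ⟨x, hx, y, hy, rfl⟩
    have hScomp : IsCompact {r | ∃ x ∈ C, ∃ y ∈ C, r = sdist x y} := by
      rw [hSeq]
      exact (hcompC.prod hcompC).image hcont
    have hSne : {r | ∃ x ∈ C, ∃ y ∈ C, r = sdist x y}.Nonempty :=
      ⟨sdist c c, c, hcC, c, hcC, rfl⟩
    have hmem : sdiam C ∈ {r | ∃ x ∈ C, ∃ y ∈ C, r = sdist x y} :=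
      hScomp.sSup_mem hSne
    obtain ⟨p, hp, q, hq, hpq⟩ := hmem
    have hpq2 : sdist p q = Real.pi / 2 := by rw [← hpq, hD]
    have hpq0 : ⟪p, q⟫ = 0 := by
      rw [← cos_sdist (hnorm p hp) (hnorm q hq), hpq2, Real.cos_pi_div_two]
    have hpi2 : Real.pi / 2 ≤ Real.pi := by linarith [Real.pi_pos]
    have hzero_of_dd : ∀ w ∈ C, ∀ x ∈ C, 0 ≤ ⟪w, x⟫ := by
      intro w hw x hx
      have := cos_le_inner (hnorm w hw) (hnorm x hx) hpi2 (hdd2 w hw x hx)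
      rwa [Real.cos_pi_div_two] at this
    -- first face, at q
    have hposq : ∀ x ∈ C, 0 ≤ ⟪q, x⟫ := hzero_of_dd q hq
    have hFs : {x ∈ C | ⟪q, x⟫ = 0} ⊆ Sph d := fun x hx => hCs hx.1
    have hFcl : IsClosed {x ∈ C | ⟪q, x⟫ = 0} :=
      hCcl.inter (isClosed_eq (continuous_const.inner continuous_id) continuous_const)
    have hFne : {x ∈ C | ⟪q, x⟫ = 0}.Nonempty :=
      ⟨p, hp, by rw [real_inner_comm]; exact hpq0⟩
    have hFcone : Convex ℝ (coneS {x ∈ C | ⟪q, x⟫ = 0}) :=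
      face_cone_convex hCcone' q hposq
    obtain ⟨e₁, he₁F, he₁⟩ := exists_extreme hFs hFcl hFne hFcone c
      (fun x hx => hu x hx.1)
    have he₁C : Convex ℝ (coneS (C \ {e₁})) :=
      face_extreme hCs hCcone' q hposq he₁F.1 he₁F.2 he₁
    have hext₁ : ExtremePt C e₁ :=
      ⟨he₁F.1, sph_anti_subset diff_subset hCanti, he₁C⟩
    -- second face, at e₁
    have hpose : ∀ x ∈ C, 0 ≤ ⟪e₁, x⟫ := hzero_of_dd e₁ he₁F.1
    have hGs : {x ∈ C | ⟪e₁, x⟫ = 0} ⊆ Sph d := fun x hx => hCs hx.1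
    have hGcl : IsClosed {x ∈ C | ⟪e₁, x⟫ = 0} :=
      hCcl.inter (isClosed_eq (continuous_const.inner continuous_id) continuous_const)
    have hGne : {x ∈ C | ⟪e₁, x⟫ = 0}.Nonempty := by
      refine ⟨q, hq, ?_⟩
      rw [real_inner_comm]
      exact he₁F.2
    have hGcone : Convex ℝ (coneS {x ∈ C | ⟪e₁, x⟫ = 0}) :=
      face_cone_convex hCcone' e₁ hpose
    obtain ⟨e₂, he₂G, he₂⟩ := exists_extreme hGs hGcl hGne hGcone c
      (fun x hx => hu x hx.1)
    have he₂C : Convex ℝ (coneS (C \ {e₂})) :=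
      face_extreme hCs hCcone' e₁ hpose he₂G.1 he₂G.2 he₂
    have hext₂ : ExtremePt C e₂ :=
      ⟨he₂G.1, sph_anti_subset diff_subset hCanti, he₂C⟩
    refine ⟨e₁, e₂, hext₁, hext₂, ?_⟩
    rw [sdist, he₂G.2, Real.arccos_zero]
end
end
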